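/- arXiv:2006.05879 — 5 statements merged into one kernel-verified Lean document; each statement's English description precedes it below -/
import Mathlib

section
/- Let A be a finite set with at least two elements, and let U, L : A → ℝ with L a ≤ U a for all a. Define b ∈ A to minimize a ↦ (max over a' ≠ a of U a') - L a, define c ∈ A \ {b} to maximize U over A \ {b}, and define π ∈ {b, c} to maximize a ↦ U a - L a over {b, c}. Then U c - L b ≤ U π - L π. -/
/-- UGapE first property: U c - L b ≤ U π - L π. -/
theorem ugape_first_property
    {A : Type*} [Fintype A] (hcard : 2 ≤ Fintype.card A)
    (U L : A → ℝ) (hUL : ∀ a, L a ≤ U a)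
    (b c π : A)
    (hb : ∀ a : A, (⨆ a' ∈ ({a' | a' ≠ b} : Set A), U a') - L b ≤
          (⨆ a' ∈ ({a' | a' ≠ a} : Set A), U a') - L a)
    (hc : c ≠ b) (hcmax : ∀ a, a ≠ b → U a ≤ U c)
    (hπ : π = b ∨ π = c)
    (hπmax : ∀ a, a = b ∨ a = c → U a - L a ≤ U π - L π) :
    U c - L b ≤ U π - L π := by
  rcases le_or_gt (U c) (U b) with hUcb | hUbc
  · have h1 : U b - L b ≤ U π - L π := hπmax b (Or.inl rfl)
    linarith
  · -- show L c ≤ L b using hb c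
    have hbdd : BddAbove (Set.range fun a' : A => ⨆ _ : a' ∈ ({a' | a' ≠ b} : Set A), U a') :=
      (Set.finite_range _).bddAbove
    have hlow : max (U c) 0 ≤ ⨆ a' ∈ ({a' | a' ≠ b} : Set A), U a' := by
      refine max_le ?_ ?_
      · refine le_ciSup_of_le hbdd c ?_
        rw [ciSup_pos (show c ∈ ({a' | a' ≠ b} : Set A) from hc)]
      · refine le_ciSup_of_le hbdd b ?_
        have : IsEmpty (b ∈ ({a' | a' ≠ b} : Set A)) := by
          simp [Set.mem_setOf_eq]
        rw [iSup_of_empty' (α := ℝ), Real.sSup_empty]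
    have hup : (⨆ a' ∈ ({a' | a' ≠ c} : Set A), U a') ≤ max (U c) 0 := by
      refine Real.iSup_le (fun a' => ?_) (le_max_right _ _)
      refine Real.iSup_le (fun _ => ?_) (le_max_right _ _)
      rcases eq_or_ne a' b with rfl | hne
      · exact le_max_of_le_left hUbc.le
      · exact le_max_of_le_left (hcmax a' hne)
    have hbc := hb c
    have hLcb : L c ≤ L b := by linarith
    have h2 : U c - L c ≤ U π - L π := hπmax c (Or.inr rfl)
    linarith
end

section
/- Let A be a finite set with at least two elements, U, L : A → ℝ, and ε ≥ 0. Define b, c, π as in the UGapE rule: b minimizes a ↦ (max_{a'≠a} U a') - L a, c maximizes U over A \ {b}, and π ∈ {b,c} maximizes U - L on {b,c}. If U c - L b > ε, then U b - L c < 2 (U π - L π) - ε. -/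
/-- UGapE second property: if the stopping rule has not triggered,
    U b - L c < 2 (U π - L π) - ε. -/
theorem ugape_second_property
    {A : Type*} [Fintype A] (hcard : 2 ≤ Fintype.card A)
    (U L : A → ℝ) (ε : ℝ) (hε : 0 ≤ ε)
    (b c π : A)
    (hb : ∀ a : A, (⨆ a' ∈ ({a' | a' ≠ b} : Set A), U a') - L b ≤
          (⨆ a' ∈ ({a' | a' ≠ a} : Set A), U a') - L a)
    (hc : c ≠ b) (hcmax : ∀ a, a ≠ b → U a ≤ U c)
    (hπ : π = b ∨ π = c)
    (hπmax : ∀ a, a = b ∨ a = c → U a - L a ≤ U π - L π)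
    (hstop : U c - L b > ε) :
    U b - L c < 2 * (U π - L π) - ε := by
  have h1 := hπmax b (Or.inl rfl)
  have h2 := hπmax c (Or.inr rfl)
  linarith
end

section
/- Let A be a finite set with at least two elements, U, L : A → ℝ, ε ≥ 0, and define b, c, π by the UGapE rule (b minimizes a ↦ (max_{a'≠a} U a') - L a; c maximizes U over A \ {b}; π ∈ {b,c} maximizes U - L). If U c - L b > ε, then for every pair a, a' ∈ {b, c}, U a - L a' ≤ 2 (U π - L π). -/
/-- Corollary of the UGapE properties: all four combinations of upper/lower
    confidence bounds of b and c are bounded by twice the diameter of π. -/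
theorem ugape_corollary
    {A : Type*} [Fintype A] (hcard : 2 ≤ Fintype.card A)
    (U L : A → ℝ) (ε : ℝ) (hε : 0 ≤ ε)
    (b c π : A)
    (hb : ∀ a : A, (⨆ a' ∈ ({a' | a' ≠ b} : Set A), U a') - L b ≤
          (⨆ a' ∈ ({a' | a' ≠ a} : Set A), U a') - L a)
    (hc : c ≠ b) (hcmax : ∀ a, a ≠ b → U a ≤ U c)
    (hπ : π = b ∨ π = c)
    (hπmax : ∀ a, a = b ∨ a = c → U a - L a ≤ U π - L π)
    (hstop : U c - L b > ε) :
    ∀ a a' : A, a ∈ ({b, c} : Set A) → a' ∈ ({b, c} : Set A) →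
      U a - L a' ≤ 2 * (U π - L π) := by
  haveI : Nonempty A := ⟨b⟩
  have hbdd : BddAbove (Set.range fun a' : A => ⨆ _ : a' ∈ ({a' | a' ≠ b} : Set A), U a') :=
    Set.Finite.bddAbove (Set.finite_range _)
  -- lower bounds on the sup over {≠ b}
  have hSb_lb : U c ≤ ⨆ a' ∈ ({a' | a' ≠ b} : Set A), U a' := by
    refine le_ciSup_of_le hbdd c ?_
    simp only [Set.mem_setOf_eq]
    rw [ciSup_pos hc]
  have hSb0 : (0 : ℝ) ≤ ⨆ a' ∈ ({a' | a' ≠ b} : Set A), U a' := by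
    refine le_ciSup_of_le hbdd b ?_
    simp only [Set.mem_setOf_eq]
    haveI : IsEmpty (b ≠ b) := ⟨fun h => h rfl⟩
    rw [Real.iSup_of_isEmpty]
  -- upper bound on the sup over {≠ c}
  have hSc_ub : (⨆ a' ∈ ({a' | a' ≠ c} : Set A), U a') ≤ max (max (U b) (U c)) 0 := by
    refine ciSup_le fun a' => ?_
    simp only [Set.mem_setOf_eq]
    by_cases h : a' = c
    · subst h
      haveI : IsEmpty (a' ≠ a') := ⟨fun h => h rfl⟩
      rw [Real.iSup_of_isEmpty]
      exact le_max_right _ _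
    · rw [ciSup_pos h]
      by_cases hab : a' = b
      · subst hab
        exact le_trans (le_max_left _ _) (le_max_left _ _)
      · exact le_trans (le_trans (hcmax a' hab) (le_max_right _ _)) (le_max_left _ _)
  have hbc := hb c
  have h1 : U c - L b ≤ max (max (U b) (U c)) 0 - L c := by
    have := le_trans hbc (by linarith [hSc_ub] : (⨆ a' ∈ ({a' | a' ≠ c} : Set A), U a') - L c ≤ max (max (U b) (U c)) 0 - L c)
    linarith
  have h2 : (0 : ℝ) - L b ≤ max (max (U b) (U c)) 0 - L c := by
    have := le_trans hbc (by linarith [hSc_ub] : (⨆ a' ∈ ({a' | a' ≠ c} : Set A), U a') - L c ≤ max (max (U b) (U c)) 0 - L c)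
    linarith
  have hDb : U b - L b ≤ U π - L π := hπmax b (Or.inl rfl)
  have hDc : U c - L c ≤ U π - L π := hπmax c (Or.inr rfl)
  -- key inequality : U c - L b ≤ U π - L π
  have hkey : U c - L b ≤ U π - L π := by
    rcases max_cases (max (U b) (U c)) 0 with ⟨he, hge⟩ | ⟨he, hlt⟩
    · rw [he] at h1
      rcases max_cases (U b) (U c) with ⟨he2, hge2⟩ | ⟨he2, hlt2⟩
      · rw [he2] at h1; linarith
      · rw [he2] at h1; linarith
    · rw [he] at h2; linarith
  intro a a' ha ha'
  rcases ha with rfl | ha <;> rcases ha' with rfl | ha' <;>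
    first
      | linarith
      | (simp only [Set.mem_singleton_iff] at *; subst_vars; linarith)
end

section
/- Let β : ℝ → ℝ be non-decreasing with β(0) ≥ 1, such that x ↦ √(β(x)/x) is non-increasing on [1, ∞). Let n, n̄, β_cnt be reals with n̄ ≥ 0, 1 ≤ β_cnt ≤ β(0), and n ≥ (1/2) n̄ - β_cnt. If β_cnt ≤ n̄/4, then min(√(β(n)/n), 1) ≤ 2 √(β(n̄) / max(n̄, 1)). -/
/-- First case of Lemma technicalCounts. -/
theorem technicalCounts_first_case
    (β : ℝ → ℝ) (hβmono : Monotone β) (hβ0 : 1 ≤ β 0)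
    (hβdec : AntitoneOn (fun x => Real.sqrt (β x / x)) (Set.Ici 1))
    (n nbar βcnt : ℝ) (hnbar : 0 ≤ nbar)
    (hβcnt1 : 1 ≤ βcnt) (hβcnt2 : βcnt ≤ β 0)
    (hn : n ≥ (1 / 2) * nbar - βcnt)
    (hcase : βcnt ≤ nbar / 4) :
    min (Real.sqrt (β n / n)) 1 ≤ 2 * Real.sqrt (β nbar / max nbar 1) := by
  have h4 : (4:ℝ) ≤ nbar := by linarith
  have hn4 : nbar / 4 ≤ n := by linarith
  have h1n4 : (1:ℝ) ≤ nbar / 4 := by linarith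
  have h1n : (1:ℝ) ≤ n := le_trans h1n4 hn4
  have hmax : max nbar 1 = nbar := max_eq_left (by linarith)
  have hβnbar : (1:ℝ) ≤ β nbar := le_trans hβ0 (hβmono hnbar)
  have step1 : Real.sqrt (β n / n) ≤ Real.sqrt (β (nbar/4) / (nbar/4)) :=
    hβdec (Set.mem_Ici.2 h1n4) (Set.mem_Ici.2 h1n) hn4
  have step2 : Real.sqrt (β (nbar/4) / (nbar/4)) ≤ Real.sqrt (β nbar / (nbar/4)) := by
    apply Real.sqrt_le_sqrt
    gcongr
    · exact hβmono (by linarith)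
  have heq : β nbar / (nbar/4) = 4 * (β nbar / nbar) := by
    field_simp
  have hfin : Real.sqrt (β nbar / (nbar/4)) = 2 * Real.sqrt (β nbar / nbar) := by
    rw [heq, Real.sqrt_mul (by norm_num), show Real.sqrt 4 = 2 by
      rw [show (4:ℝ) = 2^2 by norm_num, Real.sqrt_sq (by norm_num)]]
  calc min (Real.sqrt (β n / n)) 1 ≤ Real.sqrt (β n / n) := min_le_left _ _
    _ ≤ Real.sqrt (β nbar / (nbar/4)) := le_trans step1 step2
    _ = 2 * Real.sqrt (β nbar / max nbar 1) := by rw [hfin, hmax]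
end

section
/- Let β : ℝ → ℝ be non-decreasing with β(0) ≥ 1 and with x ↦ √(β(x)/x) non-increasing on [1, ∞). Let n, n̄ ≥ 0 and 1 ≤ β_cnt ≤ β(0) satisfy n ≥ (1/2) n̄ - β_cnt. Then min(√(β(n)/n), 1) ≤ 2 √(β(n̄) / max(n̄, 1)) (with the convention that √(β(n)/n) = +∞, i.e. the min equals 1, when n = 0). -/
/-- Full statement of Lemma technicalCounts (with the convention that the clipped
    width equals 1 when n = 0). -/
theorem technicalCounts
    (β : ℝ → ℝ) (hβmono : Monotone β) (hβ0 : 1 ≤ β 0)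
    (hβdec : AntitoneOn (fun x => Real.sqrt (β x / x)) (Set.Ici 1))
    (n nbar βcnt : ℝ) (hn0 : 0 ≤ n) (hnbar : 0 ≤ nbar)
    (hβcnt1 : 1 ≤ βcnt) (hβcnt2 : βcnt ≤ β 0)
    (hn : n ≥ (1 / 2) * nbar - βcnt) :
    (if n = 0 then 1 else min (Real.sqrt (β n / n)) 1) ≤
      2 * Real.sqrt (β nbar / max nbar 1) := by
  have hβnbar : 1 ≤ β nbar := le_trans hβ0 (hβmono hnbar)
  by_cases hcase : βcnt ≤ nbar / 4
  · -- β_cnt ≤ n̄/4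
    have h4 : (4:ℝ) ≤ nbar := by linarith
    have hmax : max nbar 1 = nbar := max_eq_left (by linarith)
    have hn1 : 1 ≤ n := by linarith
    have hne : ¬ n = 0 := by intro h; rw [h] at hn1; linarith
    rw [if_neg hne, hmax]
    have hq1 : (1:ℝ) ≤ nbar / 4 := by linarith
    have h1 : Real.sqrt (β n / n) ≤ Real.sqrt (β (nbar/4) / (nbar/4)) :=
      hβdec (Set.mem_Ici.mpr hq1) (Set.mem_Ici.mpr hn1) (by linarith)
    have h2 : Real.sqrt (β (nbar/4) / (nbar/4)) ≤ Real.sqrt (β nbar / (nbar/4)) := by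
      apply Real.sqrt_le_sqrt
      gcongr
      exact hβmono (by linarith)
    have h3 : Real.sqrt (β nbar / (nbar/4)) = 2 * Real.sqrt (β nbar / nbar) := by
      have hnb : nbar ≠ 0 := by linarith
      have : β nbar / (nbar/4) = 4 * (β nbar / nbar) := by field_simp
      rw [this, Real.sqrt_mul (by norm_num : (0:ℝ) ≤ 4),
        show Real.sqrt 4 = 2 by
          rw [show (4:ℝ) = 2^2 by norm_num, Real.sqrt_sq (by norm_num : (0:ℝ) ≤ 2)]]
    calc min (Real.sqrt (β n / n)) 1 ≤ Real.sqrt (β n / n) := min_le_left _ _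
      _ ≤ Real.sqrt (β nbar / (nbar/4)) := le_trans h1 h2
      _ = 2 * Real.sqrt (β nbar / nbar) := h3
  · -- β_cnt > n̄/4, so the RHS is at least 1
    push_neg at hcase
    have hL : (if n = 0 then (1:ℝ) else min (Real.sqrt (β n / n)) 1) ≤ 1 := by
      split
      · exact le_refl 1
      · exact min_le_right _ _
    have hmaxpos : (0:ℝ) < max nbar 1 := lt_of_lt_of_le one_pos (le_max_right _ _)
    have hfrac : (1:ℝ)/4 ≤ β nbar / max nbar 1 := by
      rw [le_div_iff₀ hmaxpos]
      have : max nbar 1 ≤ 4 * β nbar := by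
        have hb : β 0 ≤ β nbar := hβmono hnbar
        exact max_le (by linarith) (by linarith)
      linarith
    have hs : (1:ℝ)/2 ≤ Real.sqrt (β nbar / max nbar 1) := by
      have h := Real.sqrt_le_sqrt hfrac
      rwa [show Real.sqrt (1/4) = 1/2 by
        rw [show (1:ℝ)/4 = (1/2)^2 by norm_num, Real.sqrt_sq (by norm_num : (0:ℝ) ≤ 1/2)]] at h
    linarith
end
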